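/- For the generalized amplitude damping dynamics with γ = 1/10 and f = 4, let r₁ = (1,0,0), r₂ = (0,1,0), p = 1/4, q = 3/4, and define the generalized trace distance D(t) = max(‖p T(t)r₁ - q T(t)r₂ + (p-q)c(t)‖, |p-q|), i.e. D(t) = max(√((1/16)e^{-t/10} + (9/16)e^{-t/10} + (1/4)(2cos²(4t)-1)²(1-e^{-t/10})²), 1/2). Then D is not antitone on [0,∞): there exist 0 ≤ t₁ < t₂ with D(t₁) < D(t₂). -/

import Mathlib

noncomputable section

/-- The action of a qubit dynamical map, given by a real 3×3 matrix,
on Bloch vectors in ℝ³. -/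
def act (T : Matrix (Fin 3) (Fin 3) ℝ) (r : EuclideanSpace ℝ (Fin 3)) :
    EuclideanSpace ℝ (Fin 3) :=
  WithLp.toLp 2 (T.mulVec r)

/-- The matrix part T(t) = diag(√η, √η, η), η = e^{-γt}, of the generalized
amplitude damping dynamics. -/
def Tgad (γ t : ℝ) : Matrix (Fin 3) (Fin 3) ℝ :=
  Matrix.diagonal ![Real.sqrt (Real.exp (-γ * t)), Real.sqrt (Real.exp (-γ * t)),
    Real.exp (-γ * t)]

/-- The translation part c(t) = (0, 0, (2s-1)(1-η)), s = cos²(ft), η = e^{-γt}, of the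
generalized amplitude damping dynamics. -/
def cgad (γ f t : ℝ) : EuclideanSpace ℝ (Fin 3) :=
  WithLp.toLp 2 ![0, 0, (2 * Real.cos (f * t) ^ 2 - 1) * (1 - Real.exp (-γ * t))]

open Real in
private lemma gad_cos_t1 : (2 * Real.cos (4 * (77 * π / 16)) ^ 2 - 1) = 0 := by
  rw [show 2 * Real.cos (4 * (77 * π / 16)) ^ 2 - 1
      = Real.cos (2 * (4 * (77 * π / 16))) from (Real.cos_two_mul _).symm]
  rw [show 2 * (4 * (77 * π / 16)) = π / 2 + (19 : ℤ) * (2 * π) by push_cast; ring]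
  rw [Real.cos_add_int_mul_two_pi, Real.cos_pi_div_two]

open Real in
private lemma gad_cos_t2 : (2 * Real.cos (4 * (5 * π)) ^ 2 - 1) = 1 := by
  rw [show 2 * Real.cos (4 * (5 * π)) ^ 2 - 1
      = Real.cos (2 * (4 * (5 * π))) from (Real.cos_two_mul _).symm]
  rw [show 2 * (4 * (5 * π)) = 0 + (20 : ℤ) * (2 * π) by push_cast; ring]
  rw [Real.cos_add_int_mul_two_pi, Real.cos_zero]

open Real in
private lemma gad_exp_t1 : Real.exp (-(77 * π / 16) / 10) ≤ 2 / 5 := by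
  rw [show (-(77 * π / 16) / 10 : ℝ) = -(77 * π / 160) by ring, Real.exp_neg]
  rw [inv_le_comm₀ (Real.exp_pos _) (by norm_num)]
  calc (2 / 5 : ℝ)⁻¹ = 5 / 2 := by norm_num
    _ ≤ 77 * π / 160 + 1 := by nlinarith [Real.pi_gt_d6]
    _ ≤ Real.exp (77 * π / 160) := by linarith [Real.add_one_le_exp (77 * π / 160)]

/-- For the generalized amplitude damping dynamics with γ = 1/10, f = 4, with
r₁ = (1,0,0), r₂ = (0,1,0), p = 1/4, q = 3/4, the generalized trace distance
D(t) = max(‖p T(t)r₁ - q T(t)r₂ + (p-q)c(t)‖, |p-q|), which equals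
max(√((1/16)e^{-t/10} + (9/16)e^{-t/10} + (1/4)(2cos²(4t)-1)²(1-e^{-t/10})²), 1/2),
is not antitone on [0,∞): it increases somewhere. -/
theorem gad_gblp_distance_not_antitone :
    let p : ℝ := 1 / 4
    let q : ℝ := 3 / 4
    let r₁ : EuclideanSpace ℝ (Fin 3) := WithLp.toLp 2 ![1, 0, 0]
    let r₂ : EuclideanSpace ℝ (Fin 3) := WithLp.toLp 2 ![0, 1, 0]
    let D : ℝ → ℝ := fun t =>
      max ‖p • act (Tgad (1 / 10) t) r₁ - q • act (Tgad (1 / 10) t) r₂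
            + (p - q) • cgad (1 / 10) 4 t‖ |p - q|
    (∀ t : ℝ, D t = max (Real.sqrt ((1 / 16) * Real.exp (-t / 10)
        + (9 / 16) * Real.exp (-t / 10)
        + (1 / 4) * (2 * Real.cos (4 * t) ^ 2 - 1) ^ 2
            * (1 - Real.exp (-t / 10)) ^ 2)) (1 / 2))
    ∧ ¬ AntitoneOn D (Set.Ici 0)
    ∧ ∃ t₁ t₂ : ℝ, 0 ≤ t₁ ∧ t₁ < t₂ ∧ D t₁ < D t₂ := by
  intro p q r₁ r₂ D
  have hD : ∀ t : ℝ, D t = max (Real.sqrt ((1 / 16) * Real.exp (-t / 10)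
      + (9 / 16) * Real.exp (-t / 10)
      + (1 / 4) * (2 * Real.cos (4 * t) ^ 2 - 1) ^ 2
          * (1 - Real.exp (-t / 10)) ^ 2)) (1 / 2) := by
    intro t
    show max ‖_‖ _ = _
    congr 1
    · rw [EuclideanSpace.norm_eq]
      congr 1
      rw [Fin.sum_univ_three]
      simp only [p, q, r₁, r₂]
      simp [act, Tgad, cgad, Matrix.mulVec_diagonal, Real.norm_eq_abs, mul_pow, sq_abs,
        Real.sq_sqrt (Real.exp_pos (-(10⁻¹ * t))).le]
      rw [show (-t / 10 : ℝ) = -(10⁻¹ * t) by ring]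
      ring
    · show |(1 / 4 : ℝ) - 3 / 4| = 1 / 2
      rw [show ((1 / 4 : ℝ) - 3 / 4) = -(1 / 2) by norm_num, abs_neg, abs_of_nonneg] <;>
        norm_num
  refine ⟨hD, ?_, ?_⟩
  swap
  · set π := Real.pi
    have hπ : (3.141592 : ℝ) < π := Real.pi_gt_d6
    refine ⟨77 * π / 16, 5 * π, by positivity, by nlinarith, ?_⟩
    rw [hD, hD, gad_cos_t1, gad_cos_t2]
    have hη1 : Real.exp (-(77 * π / 16) / 10) ≤ 2 / 5 := gad_exp_t1
    have hη2 : (0 : ℝ) < Real.exp (-(5 * π) / 10) := Real.exp_pos _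
    have h1 : Real.sqrt ((1 / 16) * Real.exp (-(77 * π / 16) / 10)
        + (9 / 16) * Real.exp (-(77 * π / 16) / 10)
        + (1 / 4) * (0 : ℝ) ^ 2 * (1 - Real.exp (-(77 * π / 16) / 10)) ^ 2) ≤ 1 / 2 := by
      rw [show (1 / 2 : ℝ) = Real.sqrt (1 / 4) by
        rw [show (1 / 4 : ℝ) = (1 / 2) ^ 2 by norm_num, Real.sqrt_sq (by norm_num)]]
      apply Real.sqrt_le_sqrt
      nlinarith [Real.exp_pos (-(77 * π / 16) / 10)]
    have h2 : (1 / 2 : ℝ) < Real.sqrt ((1 / 16) * Real.exp (-(5 * π) / 10)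
        + (9 / 16) * Real.exp (-(5 * π) / 10)
        + (1 / 4) * (1 : ℝ) ^ 2 * (1 - Real.exp (-(5 * π) / 10)) ^ 2) := by
      rw [show (1 / 2 : ℝ) = Real.sqrt (1 / 4) by
        rw [show (1 / 4 : ℝ) = (1 / 2) ^ 2 by norm_num, Real.sqrt_sq (by norm_num)]]
      apply Real.sqrt_lt_sqrt (by norm_num)
      nlinarith
    calc max _ (1 / 2 : ℝ) = 1 / 2 := max_eq_right h1
      _ < _ := lt_max_of_lt_left h2
  · intro hA
    set π := Real.pi
    have hπ : (3.141592 : ℝ) < π := Real.pi_gt_d6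
    have ht1 : (77 * π / 16 : ℝ) ∈ Set.Ici (0 : ℝ) := by
      simp only [Set.mem_Ici]; positivity
    have ht2 : (5 * π : ℝ) ∈ Set.Ici (0 : ℝ) := by
      simp only [Set.mem_Ici]; positivity
    have hle : (77 * π / 16 : ℝ) ≤ 5 * π := by nlinarith
    have := hA ht1 ht2 hle
    -- derive contradiction from the strict increase
    rw [hD, hD, gad_cos_t1, gad_cos_t2] at this
    have hη1 : Real.exp (-(77 * π / 16) / 10) ≤ 2 / 5 := gad_exp_t1
    have hη2 : (0 : ℝ) < Real.exp (-(5 * π) / 10) := Real.exp_pos _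
    have h1 : Real.sqrt ((1 / 16) * Real.exp (-(77 * π / 16) / 10)
        + (9 / 16) * Real.exp (-(77 * π / 16) / 10)
        + (1 / 4) * (0 : ℝ) ^ 2 * (1 - Real.exp (-(77 * π / 16) / 10)) ^ 2) ≤ 1 / 2 := by
      rw [show (1 / 2 : ℝ) = Real.sqrt (1 / 4) by
        rw [show (1 / 4 : ℝ) = (1 / 2) ^ 2 by norm_num, Real.sqrt_sq (by norm_num)]]
      apply Real.sqrt_le_sqrt
      nlinarith [Real.exp_pos (-(77 * π / 16) / 10)]
    have h2 : (1 / 2 : ℝ) < Real.sqrt ((1 / 16) * Real.exp (-(5 * π) / 10)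
        + (9 / 16) * Real.exp (-(5 * π) / 10)
        + (1 / 4) * (1 : ℝ) ^ 2 * (1 - Real.exp (-(5 * π) / 10)) ^ 2) := by
      rw [show (1 / 2 : ℝ) = Real.sqrt (1 / 4) by
        rw [show (1 / 4 : ℝ) = (1 / 2) ^ 2 by norm_num, Real.sqrt_sq (by norm_num)]]
      apply Real.sqrt_lt_sqrt (by norm_num)
      nlinarith
    rw [max_eq_right h1] at this
    have := lt_of_lt_of_le (lt_max_of_lt_left h2 : (1/2 : ℝ) < _) this
    exact lt_irrefl _ this
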